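/- If f ∈ H(α, L) and K satisfies ∫K = 1, ∫|y|^α|K(y)|dy = Cₖ < ∞, and ξ_1,…,ξ_n are i.i.d. with density f, then the bias of the Wolverton–Wagner estimator satisfies |E f_n(x) − f(x)| ≤ (L Cₖ / n) Σ_{k=1}^n h_k^α for every x ∈ R^d. -/

import Mathlib

open MeasureTheory Finset

/-- Bias of the Wolverton–Wagner estimator for an `L`-Hölder density `f` of order
`α`: `|E f_n(x) − f(x)| ≤ (L Cₖ / n) Σ_{k=1}^n h_k^α` where `Cₖ = ∫ |y|^α |K(y)| dy`. -/
theorem wolverton_wagner_bias_bound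
    {Ω : Type*} [MeasurableSpace Ω] (P : Measure Ω) [IsProbabilityMeasure P]
    (d : ℕ) (f K : EuclideanSpace ℝ (Fin d) → ℝ) (L α : ℝ)
    (hL : 0 < L) (hα0 : 0 < α) (hα1 : α ≤ 1)
    (hf : ∀ x y, |f x - f y| ≤ L * ‖x - y‖ ^ α)
    (hfpos : ∀ y, 0 ≤ f y)
    (hK : Integrable K) (hK1 : ∫ y, K y = 1)
    (hKα : Integrable (fun y => ‖y‖ ^ α * |K y|))
    (h : ℕ → ℝ) (hpos : ∀ k, 0 < h k)
    (ξ : ℕ → Ω → EuclideanSpace ℝ (Fin d)) (hξmeas : ∀ k, Measurable (ξ k))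
    (hdens : ∀ k, Measure.map (ξ k) P =
      volume.withDensity (fun y => ENNReal.ofReal (f y))) :
    ∀ x : EuclideanSpace ℝ (Fin d), ∀ n : ℕ, 1 ≤ n →
      |(∫ ω, (1 / (n : ℝ)) * ∑ k ∈ Icc 1 n,
          ((h k) ^ d)⁻¹ * K ((h k)⁻¹ • (x - ξ k ω)) ∂P) - f x| ≤
        (L * (∫ y, ‖y‖ ^ α * |K y|) / n) * ∑ k ∈ Icc 1 n, (h k) ^ α := by
  intro x n hn
  set C : ℝ := ∫ y, ‖y‖ ^ α * |K y| with hC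
  have hC0 : 0 ≤ C := integral_nonneg fun y =>
    mul_nonneg (Real.rpow_nonneg (norm_nonneg _) _) (abs_nonneg _)
  -- continuity of f
  have hcont : Continuous f := by
    rw [continuous_iff_continuousAt]
    intro z
    rw [ContinuousAt, tendsto_iff_dist_tendsto_zero]
    have h1 : Filter.Tendsto (fun y : EuclideanSpace ℝ (Fin d) => L * ‖y - z‖ ^ α)
        (nhds z) (nhds 0) := by
      have h2 : Filter.Tendsto (fun y : EuclideanSpace ℝ (Fin d) => ‖y - z‖)
          (nhds z) (nhds 0) := by
        have : Continuous (fun y : EuclideanSpace ℝ (Fin d) => ‖y - z‖) :=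
          (continuous_id.sub continuous_const).norm
        simpa using this.tendsto z
      have h3 : ContinuousAt (fun s : ℝ => s ^ α) 0 :=
        Real.continuousAt_rpow_const 0 α (Or.inr hα0.le)
      have h4 : Filter.Tendsto (fun y : EuclideanSpace ℝ (Fin d) => ‖y - z‖ ^ α)
          (nhds z) (nhds 0) := by
        have := h3.tendsto.comp h2
        simpa [Function.comp_def, Real.zero_rpow hα0.ne'] using this
      simpa using h4.const_mul L
    exact squeeze_zero (fun y => dist_nonneg)
      (fun y => by simpa [Real.dist_eq] using hf y z) h1
  -- integrability of the convolution-type integrand, for any t > 0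
  have hGint : ∀ t : ℝ, 0 < t →
      Integrable (fun u : EuclideanSpace ℝ (Fin d) => K u * f (x - t • u)) := by
    intro t ht
    have hbnd : Integrable (fun u : EuclideanSpace ℝ (Fin d) =>
        f x * |K u| + L * t ^ α * (‖u‖ ^ α * |K u|)) := by
      exact (hK.abs.const_mul (f x)).add (hKα.const_mul (L * t ^ α))
    refine Integrable.mono' hbnd ?_ ?_
    · exact hK.aestronglyMeasurable.mul
        (Continuous.aestronglyMeasurable (by fun_prop))
    · refine Filter.Eventually.of_forall fun u => ?_
      have h3 : ‖x - t • u - x‖ = ‖t • u‖ := by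
        rw [sub_sub_cancel_left, norm_neg]
      have h2 : f (x - t • u) - f x ≤ L * ‖t • u‖ ^ α := by
        have := (le_abs_self (f (x - t • u) - f x)).trans (hf (x - t • u) x)
        rwa [h3] at this
      have hb : f (x - t • u) ≤ f x + L * ‖t • u‖ ^ α := by linarith
      have hsm : ‖t • u‖ ^ α = t ^ α * ‖u‖ ^ α := by
        rw [norm_smul, Real.norm_eq_abs, abs_of_pos ht,
          Real.mul_rpow ht.le (norm_nonneg _)]
      calc ‖K u * f (x - t • u)‖ = |K u| * f (x - t • u) := by
            rw [norm_mul, Real.norm_eq_abs, Real.norm_eq_abs,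
              abs_of_nonneg (hfpos _)]
        _ ≤ |K u| * (f x + L * ‖t • u‖ ^ α) :=
            mul_le_mul_of_nonneg_left hb (abs_nonneg _)
        _ = f x * |K u| + L * t ^ α * (‖u‖ ^ α * |K u|) := by
            rw [hsm]; ring
  -- the key computation for each k
  have key : ∀ k : ℕ,
      Integrable (fun ω => ((h k) ^ d)⁻¹ * K ((h k) ⁻¹ • (x - ξ k ω))) P ∧
      ∫ ω, ((h k) ^ d)⁻¹ * K ((h k)⁻¹ • (x - ξ k ω)) ∂P
        = ∫ u, K u * f (x - h k • u) := by
    intro k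
    set t : ℝ := h k with ht'
    have ht : 0 < t := hpos k
    have htd : (0:ℝ) < t ^ d := pow_pos ht d
    set g : EuclideanSpace ℝ (Fin d) → ℝ :=
      fun y => (t ^ d)⁻¹ * K (t⁻¹ • (x - y)) with hg
    have hG := hGint t ht
    set G' : EuclideanSpace ℝ (Fin d) → ℝ :=
      fun z => f (x - z) * ((t ^ d)⁻¹ * K (t⁻¹ • z)) with hG'def
    have hGscaled : (fun u : EuclideanSpace ℝ (Fin d) => G' (t • u)) =
        fun u => f (x - t • u) * ((t ^ d)⁻¹ * K u) := by
      funext u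
      simp only [hG'def, smul_smul, inv_mul_cancel₀ ht.ne', one_smul]
    have hG' : Integrable G' := by
      rw [← integrable_comp_smul_iff volume G' ht.ne']
      rw [hGscaled]
      have : Integrable (fun u : EuclideanSpace ℝ (Fin d) =>
          (t ^ d)⁻¹ * (K u * f (x - t • u))) := hG.const_mul _
      exact this.congr (Filter.Eventually.of_forall fun u => by ring)
    have hfg : Integrable (fun y : EuclideanSpace ℝ (Fin d) => f y * g y) := by
      have := hG'.comp_sub_left x
      refine this.congr (Filter.Eventually.of_forall fun y => ?_)
      simp only [hG'def, hg, sub_sub_cancel]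
    -- integral identity on volume
    have hvol : ∫ y, f y * g y = ∫ u, K u * f (x - t • u) := by
      have e1 : ∫ y, f y * g y = ∫ z, G' z := by
        rw [← integral_sub_left_eq_self G' volume x]
        congr 1
        funext y
        simp only [hG'def, hg, sub_sub_cancel]
      have e2 := Measure.integral_comp_smul
        (volume : Measure (EuclideanSpace ℝ (Fin d))) G' t
      rw [finrank_euclideanSpace_fin] at e2
      have habs : |((t ^ d : ℝ))⁻¹| = (t ^ d)⁻¹ := abs_of_pos (by positivity)
      rw [habs, smul_eq_mul] at e2
      have e3 : ∫ u, G' (t • u) = (t ^ d)⁻¹ * ∫ u, K u * f (x - t • u) := by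
        rw [hGscaled]
        rw [show (fun u : EuclideanSpace ℝ (Fin d) =>
            f (x - t • u) * ((t ^ d)⁻¹ * K u))
            = fun u => (t ^ d)⁻¹ * (K u * f (x - t • u)) by funext u; ring]
        exact integral_const_mul _ _
      rw [e1]
      have e4 := e2.symm.trans e3
      have : (t ^ d)⁻¹ * ∫ z, G' z = (t ^ d)⁻¹ * ∫ u, K u * f (x - t • u) := e4
      exact mul_left_cancel₀ (by positivity) this
    -- transfer to the probability space
    have hgvol : Integrable g := by
      have h1 : Integrable (fun z : EuclideanSpace ℝ (Fin d) => K (t⁻¹ • z)) :=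
        (integrable_comp_smul_iff volume K (inv_ne_zero ht.ne')).mpr hK
      have h2 := h1.comp_sub_left x
      exact h2.const_mul _
    have hmapAC : AEStronglyMeasurable g (Measure.map (ξ k) P) := by
      rw [hdens k]
      exact hgvol.aestronglyMeasurable.mono_ac (withDensity_absolutelyContinuous _ _)
    set F' : EuclideanSpace ℝ (Fin d) → NNReal := fun y => (f y).toNNReal with hF'
    have hF'meas : Measurable F' := (continuous_real_toNNReal.comp hcont).measurable
    have hWD : volume.withDensity (fun y => ENNReal.ofReal (f y))
        = volume.withDensity (fun y => (F' y : ENNReal)) := rfl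
    have hsmul_eq : ∀ y : EuclideanSpace ℝ (Fin d), (F' y : ℝ) • g y = f y * g y := by
      intro y
      simp only [hF', smul_eq_mul, Real.coe_toNNReal _ (hfpos y)]
    have hint_map : Integrable g (Measure.map (ξ k) P) := by
      rw [hdens k, hWD, integrable_withDensity_iff_integrable_smul hF'meas]
      exact hfg.congr (Filter.Eventually.of_forall fun y => (hsmul_eq y).symm)
    have hintP : Integrable (fun ω => g (ξ k ω)) P :=
      (integrable_map_measure hmapAC (hξmeas k).aemeasurable).mp hint_map
    have hIeq : ∫ ω, g (ξ k ω) ∂P = ∫ u, K u * f (x - t • u) := by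
      rw [← integral_map (hξmeas k).aemeasurable hmapAC, hdens k, hWD,
        integral_withDensity_eq_integral_smul hF'meas]
      rw [show (fun y : EuclideanSpace ℝ (Fin d) => F' y • g y)
          = fun y => f y * g y by funext y; exact hsmul_eq y]
      exact hvol
    exact ⟨hintP, hIeq⟩
  -- assemble
  set I : ℕ → ℝ := fun k => ∫ u, K u * f (x - h k • u) with hI
  have hInt : ∫ ω, (1 / (n : ℝ)) * ∑ k ∈ Icc 1 n,
      ((h k) ^ d)⁻¹ * K ((h k)⁻¹ • (x - ξ k ω)) ∂P
      = (1 / (n : ℝ)) * ∑ k ∈ Icc 1 n, I k := by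
    rw [integral_const_mul, integral_finset_sum _ (fun k _ => (key k).1)]
    congr 1
    exact Finset.sum_congr rfl fun k _ => (key k).2
  -- bias of each term
  have hdiff : ∀ k : ℕ, |I k - f x| ≤ L * C * (h k) ^ α := by
    intro k
    set t : ℝ := h k with ht'
    have ht : 0 < t := hpos k
    have hG := hGint t ht
    have hfx : ∫ u : EuclideanSpace ℝ (Fin d), K u * f x = f x := by
      rw [integral_mul_const, hK1, one_mul]
    have hsub : I k - f x = ∫ u, K u * (f (x - t • u) - f x) := by
      have e : ∫ u, K u * (f (x - t • u) - f x)
          = (∫ u, K u * f (x - t • u)) - ∫ u : EuclideanSpace ℝ (Fin d), K u * f x := by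
        rw [← integral_sub hG (hK.mul_const (f x))]
        congr 1; funext u; ring
      rw [e, hfx, hI]
    rw [hsub]
    have hbound : ∀ u : EuclideanSpace ℝ (Fin d), ‖K u * (f (x - t • u) - f x)‖ ≤
        (L * t ^ α) * (‖u‖ ^ α * |K u|) := by
      intro u
      have h1 : |f (x - t • u) - f x| ≤ L * ‖x - t • u - x‖ ^ α := hf _ _
      have h2 : ‖x - t • u - x‖ = t * ‖u‖ := by
        rw [sub_sub_cancel_left, norm_neg, norm_smul, Real.norm_eq_abs, abs_of_pos ht]
      rw [h2, Real.mul_rpow ht.le (norm_nonneg _)] at h1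
      calc ‖K u * (f (x - t • u) - f x)‖ = |K u| * |f (x - t • u) - f x| := by
            rw [norm_mul]; rfl
        _ ≤ |K u| * (L * (t ^ α * ‖u‖ ^ α)) := mul_le_mul_of_nonneg_left h1 (abs_nonneg _)
        _ = (L * t ^ α) * (‖u‖ ^ α * |K u|) := by ring
    have hle := norm_integral_le_of_norm_le (hKα.const_mul (L * t ^ α))
      (Filter.Eventually.of_forall hbound)
    rw [integral_const_mul] at hle
    calc |∫ u, K u * (f (x - t • u) - f x)| ≤ L * t ^ α * C := hle
      _ = L * C * t ^ α := by ring
  -- finish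
  rw [hInt]
  have hcard : (Icc 1 n).card = n := by
    rw [Nat.card_Icc]; omega
  have hn0 : (0:ℝ) < n := by exact_mod_cast hn
  have hfx_avg : f x = (1 / (n : ℝ)) * ∑ _k ∈ Icc 1 n, f x := by
    rw [Finset.sum_const, hcard, nsmul_eq_mul]
    field_simp
  calc |(1 / (n : ℝ)) * ∑ k ∈ Icc 1 n, I k - f x|
      = |(1 / (n : ℝ)) * ∑ k ∈ Icc 1 n, (I k - f x)| := by
        rw [Finset.sum_sub_distrib, mul_sub, ← hfx_avg]
    _ ≤ (1 / (n : ℝ)) * ∑ k ∈ Icc 1 n, |I k - f x| := by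
        rw [abs_mul, abs_of_pos (by positivity : (0:ℝ) < 1 / (n:ℝ))]
        exact mul_le_mul_of_nonneg_left (Finset.abs_sum_le_sum_abs _ _) (by positivity)
    _ ≤ (1 / (n : ℝ)) * ∑ k ∈ Icc 1 n, L * C * (h k) ^ α :=
        mul_le_mul_of_nonneg_left (Finset.sum_le_sum fun k _ => hdiff k) (by positivity)
    _ = (L * C / n) * ∑ k ∈ Icc 1 n, (h k) ^ α := by
        rw [← Finset.mul_sum]; ring
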